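/- arXiv:2311.00003 — 2 statements merged into one kernel-verified Lean document; each statement's English description precedes it below -/
import Mathlib

section
/- Let x, y be real numbers with 0 < x < 1 and suppose that ζ(x+iy) = 0, where ζ is the Riemann zeta function. Then for every real a > 0 the series Σ_{k=1}^∞ (−1)^{k−1} k^{−x} cos(y·log(a·k)) converges to 0, and for every real b > 0 the series Σ_{k=1}^∞ (−1)^{k−1} k^{−x} sin(y·log(b·k)) converges to 0 (with the convention (−1)^0 = 1). -/
open Filter Finset Complex Topology

noncomputable def etaTerm (s : ℂ) (j : ℕ) : ℂ :=
  ((2*j+1 : ℕ) : ℂ) ^ (-s) - ((2*j+2 : ℕ) : ℂ) ^ (-s)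

noncomputable def etaG (s : ℂ) : ℂ := ∑' j, etaTerm s j

noncomputable def etaS (s : ℂ) (n : ℕ) : ℂ :=
  ∑ k ∈ Finset.Icc 1 n, (-1 : ℂ) ^ (k - 1) * (k : ℂ) ^ (-s)

noncomputable def zetaFac (s : ℂ) : ℂ := (1 - (2:ℂ) ^ (1 - s)) * riemannZeta s

noncomputable def zetaFac' : ℂ → ℂ := Function.update zetaFac 1 (Complex.log 2)


lemma hasDerivAt_cpow_negs {s : ℂ} (hs : s ≠ 0) {t : ℝ} (ht : t ≠ 0) :
    HasDerivAt (fun u : ℝ => (u : ℂ) ^ (-s)) (-s * (t : ℂ) ^ (-s - 1)) t := by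
  have h := hasDerivAt_ofReal_cpow_const' ht (r := -s - 1) (by
    intro h
    apply hs
    have : -s = 0 := by linear_combination h
    simpa [neg_eq_zero] using this )
  have h2 := h.const_mul (-s)
  have he : (fun y : ℝ => -s * ((y:ℂ) ^ (-s - 1 + 1) / (-s - 1 + 1))) =
      (fun u : ℝ => (u : ℂ) ^ (-s)) := by
    funext y
    have : -s - 1 + 1 = -s := by ring
    rw [this]
    field_simp [neg_ne_zero.mpr hs]
  rw [he] at h2
  exact h2

lemma cpow_sub_bound {s : ℂ} (hs : 0 < s.re) {a b : ℝ} (ha : 1 ≤ a) (hab : a ≤ b) :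
    ‖(a : ℂ) ^ (-s) - (b : ℂ) ^ (-s)‖ ≤ ‖s‖ * a ^ (-s.re - 1) * (b - a) := by
  have hs0 : s ≠ 0 := by
    intro h; rw [h] at hs; simp at hs
  have key := Convex.norm_image_sub_le_of_norm_hasDerivWithin_le
    (f := fun u : ℝ => (u : ℂ) ^ (-s)) (f' := fun t : ℝ => -s * (t : ℂ) ^ (-s - 1))
    (C := ‖s‖ * a ^ (-s.re - 1)) (s := Set.Icc a b)
    (fun t htm => (hasDerivAt_cpow_negs hs0
      (t := t) (by nlinarith [htm.1] : t ≠ 0)).hasDerivWithinAt)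
    ?_ (convex_Icc a b) (Set.left_mem_Icc.mpr hab) (Set.right_mem_Icc.mpr hab)
  · have : ‖b - a‖ = b - a := by rw [Real.norm_eq_abs, _root_.abs_of_nonneg (by linarith)]
    calc ‖(a : ℂ) ^ (-s) - (b : ℂ) ^ (-s)‖ = ‖(b : ℂ) ^ (-s) - (a : ℂ) ^ (-s)‖ := by
          rw [norm_sub_rev]
      _ ≤ ‖s‖ * a ^ (-s.re - 1) * ‖b - a‖ := key
      _ = ‖s‖ * a ^ (-s.re - 1) * (b - a) := by rw [this]
  · intro t htm
    have ht0 : (0:ℝ) < t := by linarith [htm.1]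
    have hta : a ≤ t := htm.1
    rw [norm_mul, norm_neg,
      Complex.norm_cpow_eq_rpow_re_of_pos ht0]
    have hre : (-s - 1).re = -s.re - 1 := by simp
    rw [hre]
    have : t ^ (-s.re - 1) ≤ a ^ (-s.re - 1) :=
      Real.rpow_le_rpow_of_nonpos (by linarith) hta (by linarith)
    have hn : (0:ℝ) ≤ ‖s‖ := norm_nonneg s
    nlinarith

lemma etaTerm_bound {s : ℂ} {δ M : ℝ} (hδ : 0 < δ) (hδs : δ ≤ s.re) (hM : ‖s‖ ≤ M)
    (j : ℕ) : ‖etaTerm s j‖ ≤ M * ((2*j+1 : ℕ) : ℝ) ^ (-δ - 1) := by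
  have h1 : (1:ℝ) ≤ (2*j+1 : ℕ) := by exact_mod_cast Nat.succ_le_succ (Nat.zero_le _)
  have hs : 0 < s.re := lt_of_lt_of_le hδ hδs
  have key := cpow_sub_bound hs (a := ((2*j+1:ℕ):ℝ)) (b := ((2*j+2:ℕ):ℝ)) h1
    (by push_cast; linarith)
  have hba : ((2*j+2:ℕ):ℝ) - ((2*j+1:ℕ):ℝ) = 1 := by push_cast; ring
  rw [hba, mul_one] at key
  have hexp : ((2*j+1:ℕ):ℝ) ^ (-s.re - 1) ≤ ((2*j+1:ℕ):ℝ) ^ (-δ - 1) :=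
    Real.rpow_le_rpow_of_exponent_le h1 (by linarith)
  have h0 : (0:ℝ) ≤ ((2*j+1:ℕ):ℝ) ^ (-δ - 1) := Real.rpow_nonneg (by positivity) _
  have : ‖etaTerm s j‖ ≤ ‖s‖ * ((2*j+1:ℕ):ℝ) ^ (-s.re - 1) := by
    rw [etaTerm]
    convert key using 3 <;> simp [Complex.ofReal_natCast]
  calc ‖etaTerm s j‖ ≤ ‖s‖ * ((2*j+1:ℕ):ℝ) ^ (-s.re - 1) := this
    _ ≤ M * ((2*j+1:ℕ):ℝ) ^ (-δ - 1) := by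
        have := norm_nonneg s
        nlinarith [Real.rpow_nonneg (by positivity : (0:ℝ) ≤ ((2*j+1:ℕ):ℝ)) (-s.re - 1)]

lemma summable_bound {δ M : ℝ} (hδ : 0 < δ) :
    Summable (fun j : ℕ => M * ((2*j+1 : ℕ) : ℝ) ^ (-δ - 1)) := by
  apply Summable.mul_left
  have hsum : Summable (fun n : ℕ => ((n+1 : ℕ) : ℝ) ^ (-δ - 1)) := by
    have := (Real.summable_nat_rpow (p := -δ - 1)).mpr (by linarith)
    exact (this.comp_injective (add_left_injective 1)).congr (fun n => by push_cast; norm_num)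
  apply hsum.of_nonneg_of_le (fun j => Real.rpow_nonneg (by positivity) _)
  intro j
  apply Real.rpow_le_rpow_of_nonpos (by positivity) _ (by linarith)
  exact_mod_cast Nat.succ_le_succ (by omega)

lemma etaTerm_differentiable (j : ℕ) : Differentiable ℂ (fun s => etaTerm s j) := by
  apply Differentiable.sub
  · exact differentiable_id.neg.const_cpow (Or.inl (Nat.cast_ne_zero.mpr (by omega)))
  · exact differentiable_id.neg.const_cpow (Or.inl (Nat.cast_ne_zero.mpr (by omega)))

lemma etaG_analyticOnNhd : AnalyticOnNhd ℂ etaG {s : ℂ | 0 < s.re} := by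
  intro s₀ hs₀
  simp only [Set.mem_setOf_eq] at hs₀
  set δ := s₀.re / 2 with hδdef
  have hδ : 0 < δ := by positivity
  set M := ‖s₀‖ + δ with hMdef
  have hdiff : DifferentiableOn ℂ etaG (Metric.ball s₀ δ) := by
    have := differentiableOn_tsum_of_summable_norm (U := Metric.ball s₀ δ) (F := fun j s => etaTerm s j)
      (u := fun j => M * ((2*j+1 : ℕ) : ℝ) ^ (-δ - 1)) (summable_bound hδ)
      (fun j => (etaTerm_differentiable j).differentiableOn) Metric.isOpen_ball ?_
    · exact this
    · intro j w hw
      rw [Metric.mem_ball, dist_eq_norm] at hw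
      have h1 : |w.re - s₀.re| ≤ ‖w - s₀‖ := by
        simpa using Complex.abs_re_le_norm (w - s₀)
      apply etaTerm_bound hδ ?_ ?_ j
      · have := abs_le.mp h1
        have := this.1
        simp only [hδdef]
        linarith [hw.le, abs_le.mp h1 |>.1]
      · calc ‖w‖ ≤ ‖s₀‖ + ‖w - s₀‖ := by
              simpa using norm_add_le (s₀) (w - s₀)
          _ ≤ M := by rw [hMdef]; linarith [hw.le]
  exact (hdiff.analyticOnNhd Metric.isOpen_ball) s₀ (Metric.mem_ball_self hδ)

lemma etaS_even (s : ℂ) (m : ℕ) :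
    etaS s (2*m) = ∑ j ∈ Finset.range m, etaTerm s j := by
  induction m with
  | zero => simp [etaS]
  | succ m ih =>
    have h2 : 2*(m+1) = (2*m+1)+1 := by ring
    rw [h2, etaS, Finset.sum_Icc_succ_top (by omega), Finset.sum_Icc_succ_top (by omega)]
    rw [← etaS, ih, Finset.sum_range_succ, etaTerm]
    have e1 : (-1 : ℂ) ^ (2*m+1-1) = 1 := by
      have : 2*m+1-1 = 2*m := by omega
      rw [this]; exact Even.neg_one_pow (even_two_mul m)
    have e2 : (-1 : ℂ) ^ ((2*m+1)+1-1) = -1 := by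
      have : (2*m+1)+1-1 = 2*m+1 := by omega
      rw [this]; exact Odd.neg_one_pow ⟨m, by ring⟩
    rw [e1, e2]
    push_cast
    ring_nf

lemma etaS_tendsto {s : ℂ} (hs : 0 < s.re) :
    Filter.Tendsto (etaS s) atTop (nhds (etaG s)) := by
  have hsum : Summable (etaTerm s) :=
    Summable.of_norm_bounded (summable_bound (M := ‖s‖) hs)
      (etaTerm_bound hs le_rfl le_rfl)
  have hP : Tendsto (fun m => ∑ j ∈ Finset.range m, etaTerm s j) atTop (nhds (etaG s)) :=
    hsum.hasSum.tendsto_sum_nat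
  have hdiv : Tendsto (fun n : ℕ => n / 2) atTop atTop :=
    Filter.tendsto_atTop_atTop.mpr (fun b => ⟨2*b, fun n hn => by omega⟩)
  have hgt : Tendsto (fun n : ℕ => ((n:ℝ)) ^ (-s.re)) atTop (nhds 0) :=
    (tendsto_rpow_neg_atTop hs).comp tendsto_natCast_atTop_atTop
  have hbound : ∀ᶠ n : ℕ in atTop,
      ‖(if Odd n then (n : ℂ) ^ (-s) else 0)‖ ≤ (n:ℝ) ^ (-s.re) := by
    filter_upwards [Filter.eventually_ge_atTop 1] with n hn
    by_cases h : Odd n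
    · simp only [h, if_true]
      rw [show ((n:ℂ)) = (((n:ℝ)):ℂ) by push_cast; rfl,
        Complex.norm_cpow_eq_rpow_re_of_pos (by exact_mod_cast hn : (0:ℝ) < (n:ℝ))]
      simp
    · simp only [h, if_false, norm_zero]
      positivity
  have hodd : Tendsto (fun n : ℕ => if Odd n then (n : ℂ) ^ (-s) else 0) atTop (nhds 0) :=
    squeeze_zero_norm' hbound hgt
  have key : ∀ n : ℕ, etaS s n = (∑ j ∈ Finset.range (n/2), etaTerm s j)
      + (if Odd n then (n : ℂ) ^ (-s) else 0) := by
    intro n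
    rcases Nat.even_or_odd n with ⟨m, hm⟩ | ⟨m, hm⟩
    · have hn2 : n = 2*m := by omega
      subst hn2
      have hno : ¬ Odd (2*m) := by simp [Nat.odd_iff, Nat.mul_mod_right]
      have hdq : (2*m)/2 = m := by omega
      rw [etaS_even, hdq, if_neg hno, add_zero]
    · have hn2 : n = 2*m+1 := by omega
      subst hn2
      have hdq : (2*m+1)/2 = m := by omega
      rw [hdq]
      have : etaS s (2*m+1) = etaS s (2*m) + (-1:ℂ)^(2*m+1-1) * ((2*m+1 : ℕ) : ℂ)^(-s) := by
        rw [etaS, Finset.sum_Icc_succ_top (by omega)]; rfl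
      rw [this, etaS_even]
      have e1 : (-1 : ℂ) ^ (2*m+1-1) = 1 := by
        have h : 2*m+1-1 = 2*m := by omega
        rw [h]; exact Even.neg_one_pow (even_two_mul m)
      rw [e1, if_pos ⟨m, by ring⟩]
      push_cast
      ring
  have := (hP.comp hdiv).add hodd
  rw [add_zero] at this
  apply this.congr
  intro n
  exact (key n).symm

lemma etaG_eq_of_one_lt {s : ℂ} (hs : 1 < s.re) :
    etaG s = (1 - (2:ℂ) ^ (1 - s)) * riemannZeta s := by
  set f : ℕ → ℂ := fun n => ((n : ℂ) + 1) ^ (-s) with hf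
  have hF : Summable f := by
    have h := (Complex.summable_one_div_nat_cpow (p := s)).mpr hs
    have h2 := h.comp_injective (add_left_injective 1)
    apply h2.congr
    intro n
    simp only [Function.comp, hf]
    rw [Complex.cpow_neg, one_div]
    push_cast
    ring_nf
  have hFe : Summable (fun j : ℕ => f (2*j)) :=
    hF.comp_injective (fun a b h => by omega)
  have hFo : Summable (fun j : ℕ => f (2*j+1)) :=
    hF.comp_injective (fun a b h => by omega)
  have hzeta : riemannZeta s = ∑' n : ℕ, f n := by
    rw [zeta_eq_tsum_one_div_nat_add_one_cpow hs]
    congr 1; funext n; rw [hf]; simp only; rw [Complex.cpow_neg, one_div]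
  have hsplit := tsum_even_add_odd hFe hFo
  have hterm : ∀ j : ℕ, etaTerm s j = f (2*j) - f (2*j+1) := by
    intro j
    rw [etaTerm, hf]
    simp only
    push_cast
    ring_nf
  have hG : etaG s = (∑' j, f (2*j)) - ∑' j, f (2*j+1) := by
    rw [etaG]
    rw [show (fun j => etaTerm s j) = (fun j => f (2*j) - f (2*j+1)) from funext hterm]
    exact Summable.tsum_sub hFe hFo
  have hodd : (∑' j, f (2*j+1)) = (2:ℂ) ^ (-s) * riemannZeta s := by
    have : ∀ j : ℕ, f (2*j+1) = (2:ℂ) ^ (-s) * f j := by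
      intro j
      rw [hf]
      simp only
      push_cast
      rw [show ((2*(j:ℂ)+1) + 1) = ((2:ℝ) : ℂ) * (((j:ℝ)+1 : ℝ) : ℂ) by push_cast; ring]
      rw [Complex.mul_cpow_ofReal_nonneg (by norm_num) (by positivity)]
      push_cast
      ring_nf
    rw [show (fun j => f (2*j+1)) = (fun j => (2:ℂ)^(-s) * f j) from funext this,
      tsum_mul_left, hzeta]
  have h2s : (2:ℂ) ^ (1 - s) = 2 * (2:ℂ) ^ (-s) := by
    rw [show (1 : ℂ) - s = 1 + (-s) by ring, Complex.cpow_add _ _ (by norm_num), Complex.cpow_one]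
  have heven : (∑' j, f (2*j)) = riemannZeta s - (2:ℂ) ^ (-s) * riemannZeta s := by
    have := hsplit
    rw [hodd, ← hzeta] at this
    linear_combination this
  rw [hG, heven, hodd, h2s]
  ring

lemma fac_differentiable : Differentiable ℂ (fun s : ℂ => 1 - (2:ℂ) ^ (1 - s)) :=
  (differentiable_const 1).sub
    (((differentiable_const 1).sub differentiable_id).const_cpow (Or.inl two_ne_zero))

lemma zetaFac_differentiableAt {s : ℂ} (hs : s ≠ 1) : DifferentiableAt ℂ zetaFac s :=
  ((fac_differentiable s).mul (differentiableAt_riemannZeta hs))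

lemma zetaFac'_eventuallyEq {s : ℂ} (hs : s ≠ 1) : zetaFac' =ᶠ[nhds s] zetaFac := by
  filter_upwards [isOpen_compl_singleton.mem_nhds (by simpa using hs :
    s ∈ ({1}ᶜ : Set ℂ))] with t ht
  exact Function.update_of_ne ht _ _

lemma zetaFac_tendsto : Tendsto zetaFac (nhdsWithin 1 {(1:ℂ)}ᶜ) (nhds (Complex.log 2)) := by
  have hd : HasDerivAt (fun s : ℂ => 1 - (2:ℂ) ^ (1 - s)) (Complex.log 2) 1 := by
    have h1 : HasDerivAt (fun s : ℂ => (1:ℂ) - s) (-1) 1 :=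
      (hasDerivAt_const _ _).sub (hasDerivAt_id 1) |>.congr_deriv (by ring)
    have h2 := h1.const_cpow (c := 2) (Or.inl two_ne_zero)
    have h3 := (hasDerivAt_const (1:ℂ) (1:ℂ)).sub h2
    exact h3.congr_deriv (by simp)
  have hslope := hasDerivAt_iff_tendsto_slope.mp hd
  have hres := riemannZeta_residue_one
  have := hslope.mul hres
  rw [mul_one] at this
  apply this.congr'
  filter_upwards [self_mem_nhdsWithin] with z hz
  have hz1 : z - 1 ≠ 0 := sub_ne_zero.mpr hz
  rw [slope_def_field]
  rw [zetaFac]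
  field_simp
  simp

lemma zetaFac'_analyticOnNhd : AnalyticOnNhd ℂ zetaFac' Set.univ := by
  intro s _
  by_cases hs : s = 1
  · subst hs
    apply Complex.analyticAt_of_differentiable_on_punctured_nhds_of_continuousAt
    · filter_upwards [self_mem_nhdsWithin] with z hz
      have hz1 : z ≠ 1 := hz
      exact (zetaFac_differentiableAt hz1).congr_of_eventuallyEq (zetaFac'_eventuallyEq hz1)
    · rw [← continuousWithinAt_compl_self]
      unfold ContinuousWithinAt
      have h1 : zetaFac' 1 = Complex.log 2 := by
        rw [zetaFac']; exact Function.update_self _ _ _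
      rw [h1]
      apply zetaFac_tendsto.congr'
      filter_upwards [self_mem_nhdsWithin] with z hz
      exact (Function.update_of_ne hz _ _).symm
  · have hdo : DifferentiableOn ℂ zetaFac' {(1:ℂ)}ᶜ := fun z hz =>
      ((zetaFac_differentiableAt hz).congr_of_eventuallyEq
        (zetaFac'_eventuallyEq hz)).differentiableWithinAt
    exact (hdo.analyticOnNhd isOpen_compl_singleton) s hs

lemma etaG_eq_fac {s : ℂ} (hs : 0 < s.re) : etaG s = zetaFac' s := by
  have hU : IsPreconnected {s : ℂ | 0 < s.re} := (convex_halfSpace_re_gt 0).isPreconnected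
  have h2 : (2:ℂ) ∈ {s : ℂ | 0 < s.re} := by norm_num
  have heq : etaG =ᶠ[nhds 2] zetaFac' := by
    have hopen : IsOpen {s : ℂ | 1 < s.re} := isOpen_lt continuous_const Complex.continuous_re
    filter_upwards [hopen.mem_nhds (by norm_num : (2:ℂ) ∈ {s : ℂ | 1 < s.re})] with z hz
    have hz1 : z ≠ 1 := by
      intro h; rw [h] at hz; simp at hz
    rw [etaG_eq_of_one_lt hz, zetaFac', Function.update_of_ne hz1, zetaFac]
  exact etaG_analyticOnNhd.eqOn_of_preconnected_of_eventuallyEq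
    (zetaFac'_analyticOnNhd.mono (Set.subset_univ _)) hU h2 heq hs

lemma eta_zero {s : ℂ} (h0 : 0 < s.re) (h1 : s.re < 1) (hz : riemannZeta s = 0) :
    Filter.Tendsto (etaS s) atTop (nhds 0) := by
  have hs1 : s ≠ 1 := by
    intro h; rw [h] at h1; simp at h1
  have : etaG s = 0 := by
    rw [etaG_eq_fac h0, zetaFac', Function.update_of_ne hs1, zetaFac, hz, mul_zero]
  rw [← this]
  exact etaS_tendsto h0

lemma term_eq (x y : ℝ) {a : ℝ} (ha : 0 < a) {k : ℕ} (hk : 1 ≤ k) :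
    Complex.exp ((-(y * Real.log a) : ℝ) * Complex.I) *
      ((-1:ℂ) ^ (k-1) * (k:ℂ) ^ (-((x:ℂ) + (y:ℂ) * Complex.I)))
    = (((-1:ℝ)^(k-1) * (k:ℝ)^(-x) : ℝ) : ℂ) *
      Complex.exp ((-(y * Real.log (a*k)) : ℝ) * Complex.I) := by
  have hk0 : (0:ℝ) < (k:ℝ) := by exact_mod_cast hk
  have hcpow : (k:ℂ) ^ (-((x:ℂ) + (y:ℂ) * Complex.I)) =
      (((k:ℝ)^(-x) : ℝ) : ℂ) * Complex.exp ((-(y * Real.log k) : ℝ) * Complex.I) := by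
    rw [show ((k:ℕ):ℂ) = (((k:ℝ)):ℂ) by push_cast; rfl]
    rw [Complex.cpow_def_of_ne_zero (by exact_mod_cast hk0.ne' : ((k:ℝ):ℂ) ≠ 0)]
    rw [← Complex.ofReal_log hk0.le, Real.rpow_def_of_pos hk0, Complex.ofReal_exp,
      ← Complex.exp_add]
    congr 1
    push_cast
    ring
  rw [hcpow, Real.log_mul ha.ne' hk0.ne']
  rw [show ((-1:ℂ))^(k-1) = (((-1:ℝ)^(k-1) : ℝ) : ℂ) by push_cast; rfl]
  rw [show ((-(y * (Real.log a + Real.log k)) : ℝ) : ℂ) * Complex.I =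
    ((-(y * Real.log a) : ℝ) : ℂ) * Complex.I + ((-(y * Real.log k) : ℝ) : ℂ) * Complex.I
    by push_cast; ring]
  rw [Complex.exp_add]
  push_cast
  ring

theorem stmt_1 (x y : ℝ) (hx0 : 0 < x) (hx1 : x < 1)
    (hz : riemannZeta ((x : ℂ) + (y : ℂ) * Complex.I) = 0) :
    (∀ a : ℝ, 0 < a →
      Tendsto (fun n : ℕ => ∑ k ∈ Finset.Icc 1 n,
          (-1 : ℝ) ^ (k - 1) * (k : ℝ) ^ (-x) * Real.cos (y * Real.log (a * k)))
        atTop (nhds 0)) ∧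
    (∀ b : ℝ, 0 < b →
      Tendsto (fun n : ℕ => ∑ k ∈ Finset.Icc 1 n,
          (-1 : ℝ) ^ (k - 1) * (k : ℝ) ^ (-x) * Real.sin (y * Real.log (b * k)))
        atTop (nhds 0)) := by
  set s₀ : ℂ := (x : ℂ) + (y : ℂ) * Complex.I with hs₀
  have hre : s₀.re = x := by simp [hs₀]
  have hmain : Filter.Tendsto (etaS s₀) atTop (nhds 0) :=
    eta_zero (by rw [hre]; exact hx0) (by rw [hre]; exact hx1) hz
  have key : ∀ a : ℝ, 0 < a → ∀ n : ℕ,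
      (Complex.exp ((-(y * Real.log a) : ℝ) * Complex.I) * etaS s₀ n) =
      ∑ k ∈ Finset.Icc 1 n, ((((-1:ℝ)^(k-1) * (k:ℝ)^(-x) : ℝ)) : ℂ) *
        Complex.exp ((-(y * Real.log (a*k)) : ℝ) * Complex.I) := by
    intro a ha n
    rw [etaS, Finset.mul_sum]
    apply Finset.sum_congr rfl
    intro k hk
    exact term_eq x y ha (Finset.mem_Icc.mp hk).1
  constructor
  · intro a ha
    have h1 : Tendsto (fun n => Complex.exp ((-(y * Real.log a) : ℝ) * Complex.I) * etaS s₀ n)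
        atTop (nhds 0) := by
      have := hmain.const_mul (Complex.exp ((-(y * Real.log a) : ℝ) * Complex.I))
      rwa [mul_zero] at this
    have h2 : Tendsto (fun n => (Complex.exp ((-(y * Real.log a) : ℝ) * Complex.I)
        * etaS s₀ n).re) atTop (nhds 0) := by
      have := (Complex.continuous_re.tendsto 0).comp h1
      simpa only [Function.comp_def, Complex.zero_re] using this
    apply h2.congr
    intro n
    rw [key a ha n, Complex.re_sum]
    apply Finset.sum_congr rfl
    intro k hk
    rw [Complex.re_ofReal_mul, Complex.exp_ofReal_mul_I_re, Real.cos_neg]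
  · intro b hb
    have h1 : Tendsto (fun n => Complex.exp ((-(y * Real.log b) : ℝ) * Complex.I) * etaS s₀ n)
        atTop (nhds 0) := by
      have := hmain.const_mul (Complex.exp ((-(y * Real.log b) : ℝ) * Complex.I))
      rwa [mul_zero] at this
    have h2 : Tendsto (fun n => -((Complex.exp ((-(y * Real.log b) : ℝ) * Complex.I)
        * etaS s₀ n).im)) atTop (nhds 0) := by
      have := (Complex.continuous_im.tendsto 0).comp h1
      simp only [Complex.zero_im, Function.comp] at this
      simpa using this.neg
    apply h2.congr
    intro n
    rw [key b hb n, Complex.im_sum, ← Finset.sum_neg_distrib]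
    apply Finset.sum_congr rfl
    intro k hk
    rw [Complex.im_ofReal_mul, Complex.exp_ofReal_mul_I_im, Real.sin_neg]
    ring
end

section
/- Let Q be the set of squarefree odd integers greater than 1 (the finite products of distinct odd primes), with sgn q = (−1)^n when q is a product of n distinct odd primes, and fix a bijective enumeration q_1, q_2, q_3, ... of Q. For positive integers k, i let δ(k,i) = 1 if q_i divides k and 0 otherwise, and let f(k,h) = Σ_{i=1}^h sgn(q_i)·δ(k,i). Let x, y be real numbers with 1/2 < x < 1 and y > 0, suppose ζ(x+iy) = 0, and set a_k = (−1)^{k−1} k^{−x} cos(y·log k) and b_k = (−1)^{k−1} k^{−x} sin(y·log k) (with (−1)^0 = 1). Then for every positive integer h, the series Σ_{k=1}^∞ f(k,h)·a_k converges to 0 and the series Σ_{k=1}^∞ f(k,h)·b_k converges to 0. -/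
open Filter Finset Complex

noncomputable def etaPair (w : ℂ) (j : ℕ) : ℂ :=
  ((2*j+1 : ℕ) : ℂ) ^ (-w) - ((2*j+2 : ℕ) : ℂ) ^ (-w)

noncomputable def etaF (w : ℂ) : ℂ := ∑' j, etaPair w j

-- MVT bound
lemma etaPair_norm_le {w : ℂ} (hw : 0 < w.re) (j : ℕ) :
    ‖etaPair w j‖ ≤ ‖w‖ * ((2*j+1 : ℝ)) ^ (-w.re - 1) := by
  have hw0 : w ≠ 0 := by
    intro h; rw [h] at hw; simp at hw
  set a : ℝ := (2*j+1 : ℝ) with ha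
  have ha1 : (1:ℝ) ≤ a := by
    have h0 : (0:ℝ) ≤ 2*(j:ℝ) := by positivity
    rw [ha]; linarith
  have key : ∀ t ∈ Set.Icc a (a+1),
      HasDerivWithinAt (fun t : ℝ => ((t:ℂ)) ^ (-w)) (-w * (t:ℂ) ^ (-w-1)) (Set.Icc a (a+1)) t := by
    intro t ht
    have ht0 : (0:ℝ) < t := lt_of_lt_of_le one_pos (le_trans ha1 ht.1)
    have h1 : HasDerivAt (fun u : ℝ => ((u:ℂ)) ^ ((-w-1) + 1) / ((-w-1)+1)) ((t:ℂ) ^ (-w-1)) t :=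
      hasDerivAt_ofReal_cpow_const' ht0.ne' (by
        intro h
        apply hw0
        have : w = 0 := by linear_combination -h
        exact this)
    have h2 : HasDerivAt (fun u : ℝ => (-w) * (((u:ℂ)) ^ (-w) / (-w))) ((-w) * (t:ℂ) ^ (-w-1)) t := by
      have := h1.const_mul (-w)
      simpa [sub_add_cancel] using this
    have h3 : (fun u : ℝ => (-w) * (((u:ℂ)) ^ (-w) / (-w))) = fun u : ℝ => ((u:ℂ)) ^ (-w) := by
      funext u
      field_simp
    rw [h3] at h2
    exact h2.hasDerivWithinAt
  have bound : ∀ t ∈ Set.Icc a (a+1), ‖-w * (t:ℂ) ^ (-w-1)‖ ≤ ‖w‖ * a ^ (-w.re - 1) := by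
    intro t ht
    have ht0 : (0:ℝ) < t := lt_of_lt_of_le one_pos (le_trans ha1 ht.1)
    rw [norm_mul, norm_neg]
    have : ‖(t:ℂ) ^ (-w-1)‖ = t ^ (-w.re - 1) := by
      rw [Complex.norm_cpow_eq_rpow_re_of_pos ht0]
      norm_num
    rw [this]
    have hle : t ^ (-w.re - 1) ≤ a ^ (-w.re - 1) :=
      Real.rpow_le_rpow_of_nonpos (lt_of_lt_of_le one_pos ha1) ht.1 (by linarith)
    exact mul_le_mul_of_nonneg_left hle (norm_nonneg w)
  have := Convex.norm_image_sub_le_of_norm_hasDerivWithin_le key bound (convex_Icc a (a+1))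
    (Set.left_mem_Icc.2 (by linarith)) (Set.right_mem_Icc.2 (by linarith))
  have heq : etaPair w j = ((a:ℂ))^(-w) - (((a+1:ℝ):ℂ))^(-w) := by
    rw [etaPair, ha]
    push_cast
    ring_nf
  calc ‖etaPair w j‖ = ‖(fun t : ℝ => ((t:ℂ)) ^ (-w)) (a+1) - (fun t : ℝ => ((t:ℂ)) ^ (-w)) a‖ := by
        rw [heq, norm_sub_rev]
    _ ≤ ‖w‖ * a ^ (-w.re - 1) * ‖(a+1) - a‖ := this
    _ = ‖w‖ * a ^ (-w.re - 1) := by norm_num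

lemma summable_aux {c : ℝ} (hc : c < -1) : Summable (fun j : ℕ => ((2*j+1 : ℝ)) ^ c) := by
  have h1 : Summable (fun n : ℕ => ((n : ℝ)) ^ c) := Real.summable_nat_rpow.2 hc
  have h2 : Summable (fun n : ℕ => (((n+1 : ℕ) : ℝ)) ^ c) := by
    exact (summable_nat_add_iff 1).2 h1
  apply h2.of_nonneg_of_le (fun j => Real.rpow_nonneg (by positivity) c)
  intro j
  apply Real.rpow_le_rpow_of_nonpos (by positivity) (by push_cast; linarith) (by linarith)

lemma summable_etaPair {w : ℂ} (hw : 0 < w.re) : Summable (etaPair w) := by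
  apply Summable.of_norm_bounded ((summable_aux (c := -w.re - 1) (by linarith)).mul_left ‖w‖)
  exact etaPair_norm_le hw

lemma etaPair_partial (w : ℂ) (m : ℕ) :
    ∑ j ∈ Finset.range m, etaPair w j
      = ∑ k ∈ Finset.Icc 1 (2*m), (-1 : ℂ)^(k-1) * (k : ℂ) ^ (-w) := by
  induction m with
  | zero => simp
  | succ m ih =>
    have e1 : 2*(m+1) = (2*m+1) + 1 := by ring
    rw [Finset.sum_range_succ, ih, e1,
      Finset.sum_Icc_succ_top (by omega), Finset.sum_Icc_succ_top (by omega)]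
    have s1 : ((-1 : ℂ))^((2*m+1)-1) = 1 := by
      simp [pow_mul]
    have s2 : ((-1 : ℂ))^((2*m+1+1)-1) = -1 := by
      have : (2*m+1+1)-1 = 2*m+1 := by omega
      rw [this, pow_succ, pow_mul]
      simp
    rw [s1, s2, etaPair, add_assoc]
    congr 1
    push_cast
    ring

lemma tendsto_eta_partial {w : ℂ} (hw : 0 < w.re) :
    Tendsto (fun n : ℕ => ∑ k ∈ Finset.Icc 1 n, (-1 : ℂ)^(k-1) * (k : ℂ) ^ (-w))
      atTop (nhds (etaF w)) := by
  have hsum := summable_etaPair hw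
  have hP : Tendsto (fun m : ℕ => ∑ j ∈ Finset.range m, etaPair w j) atTop (nhds (etaF w)) :=
    hsum.hasSum.tendsto_sum_nat
  have hdiv : Tendsto (fun n : ℕ => n / 2) atTop atTop := by
    apply tendsto_atTop_atTop.2
    intro b
    exact ⟨2*b, fun n hn => Nat.le_div_iff_mul_le (by norm_num) |>.2 (by omega)⟩
  have hmain : ∀ n : ℕ, ∑ k ∈ Finset.Icc 1 n, (-1 : ℂ)^(k-1) * (k : ℂ) ^ (-w)
      = (∑ j ∈ Finset.range (n/2), etaPair w j) + (if Odd n then (n : ℂ) ^ (-w) else 0) := by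
    intro n
    rcases Nat.even_or_odd n with he | ho
    · obtain ⟨m, rfl⟩ := he
      have : m + m = 2 * m := by ring
      rw [this, etaPair_partial]
      simp [Nat.mul_div_cancel_left, (by decide : ¬ Odd 2), Nat.even_iff, parity_simps]
    · obtain ⟨m, rfl⟩ := ho
      have h2 : (2*m+1)/2 = m := by omega
      rw [h2, etaPair_partial, Finset.sum_Icc_succ_top (by omega)]
      have : ((-1 : ℂ))^((2*m+1)-1) = 1 := by simp [pow_mul]
      rw [this, if_pos (odd_two_mul_add_one m)]
      push_cast
      ring
  simp only [hmain]
  have h2 : Tendsto (fun n : ℕ => (if Odd n then (n : ℂ) ^ (-w) else 0)) atTop (nhds 0) := by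
    apply squeeze_zero_norm (a := fun n : ℕ => ((n:ℝ)) ^ (-w.re))
    · intro n
      rcases Nat.eq_zero_or_pos n with rfl | hn
      · simp [Real.zero_rpow (by linarith : -w.re ≠ 0)]
      split
      · rw [show ((n:ℂ)) = (((n:ℝ)):ℂ) by push_cast; ring]
        rw [Complex.norm_cpow_eq_rpow_re_of_pos (by exact_mod_cast hn)]
        norm_num
      · simp only [norm_zero]
        positivity
    · have : Tendsto (fun t : ℝ => t ^ (-w.re)) atTop (nhds 0) :=
        tendsto_rpow_neg_atTop hw
      exact this.comp tendsto_natCast_atTop_atTop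
  have := (hP.comp hdiv).add h2
  simpa using this

lemma etaF_eq_of_one_lt {s : ℂ} (hs : 1 < s.re) :
    etaF s = (1 - 2 ^ ((1:ℂ)-s)) * riemannZeta s := by
  have hs0 : s ≠ 0 := by intro h; rw [h] at hs; simp at hs; linarith
  set f : ℕ → ℂ := fun n => (n : ℂ) ^ (-s) with hfdef
  have hsummable : Summable f := by
    have := (Complex.summable_one_div_nat_cpow (p := s)).2 hs
    apply this.congr
    intro n
    rw [hfdef]
    simp [cpow_neg, one_div]
  have hzeta : riemannZeta s = ∑' n, f n := by
    rw [zeta_eq_tsum_one_div_nat_cpow hs]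
    congr 1
    funext n
    simp [hfdef, cpow_neg, one_div]
  have hf : HasSum f (riemannZeta s) := hzeta ▸ hsummable.hasSum
  have hmul : ∀ j : ℕ, f (2*j) = 2 ^ (-s) * f j := by
    intro j
    rw [hfdef]
    simp only
    have h1 : ((2*j : ℕ) : ℂ) = (((2:ℝ)) : ℂ) * (((j:ℝ)) : ℂ) := by push_cast; ring
    rw [h1, Complex.mul_cpow_ofReal_nonneg (by norm_num) (Nat.cast_nonneg j)]
    norm_num
  have heven : HasSum (fun j => f (2*j)) (2 ^ (-s) * riemannZeta s) := by
    have := hf.mul_left (2 ^ (-s))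
    apply this.congr_fun
    intro j
    rw [hmul j]
  have hodd_s : Summable (fun j => f (2*j+1)) :=
    hsummable.comp_injective (fun a b hab => by omega)
  have hodd : HasSum (fun j => f (2*j+1)) (riemannZeta s - 2 ^ (-s) * riemannZeta s) := by
    have h1 := heven.even_add_odd hodd_s.hasSum
    have h2 : 2 ^ (-s) * riemannZeta s + ∑' j, f (2*j+1) = riemannZeta s := h1.unique hf
    have : ∑' j, f (2*j+1) = riemannZeta s - 2 ^ (-s) * riemannZeta s := by linear_combination h2
    rw [← this]
    exact hodd_s.hasSum
  have heven2 : HasSum (fun j => f (2*j+2)) (2 ^ (-s) * riemannZeta s) := by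
    have hcomp : HasSum (fun j => f (2*(j+1))) (2 ^ (-s) * riemannZeta s - f (2*0)) := by
      apply (hasSum_nat_add_iff (f := fun j => f (2*j))
        (g := 2 ^ (-s) * riemannZeta s - f (2*0)) 1).2
      simpa using heven
    have hf0 : f 0 = 0 := by
      rw [hfdef]; simp [Complex.zero_cpow (neg_ne_zero.2 hs0)]
    have heq : (fun j => f (2*(j+1))) = fun j => f (2*j+2) := by
      funext j
      have : 2*(j+1) = 2*j+2 := by ring
      rw [this]
    rw [heq] at hcomp
    simpa [hf0] using hcomp
  have hpair : HasSum (etaPair s)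
      ((riemannZeta s - 2 ^ (-s) * riemannZeta s) - 2 ^ (-s) * riemannZeta s) := by
    have := hodd.sub heven2
    apply this.congr_fun
    intro j
    rw [etaPair, hfdef]
  rw [etaF, hpair.tsum_eq]
  have h2 : (2:ℂ) ^ ((1:ℂ)-s) = 2 * 2 ^ (-s) := by
    rw [show (1:ℂ)-s = 1 + (-s) by ring, Complex.cpow_add _ _ (by norm_num)]
    norm_num
  rw [h2]
  ring

lemma etaF_eq_strip {w : ℂ} (h1 : 1/2 < w.re) (h2 : 0 < w.im) :
    etaF w = (1 - 2 ^ ((1:ℂ)-w)) * riemannZeta w := by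
  set R : ℝ := ‖w‖ + 5 with hR
  set U : Set ℂ := {z : ℂ | 1/2 < z.re ∧ 0 < z.im} ∩ Metric.ball 0 R with hU
  have hUopen : IsOpen U := by
    apply IsOpen.inter _ Metric.isOpen_ball
    exact (isOpen_lt continuous_const Complex.continuous_re).inter
      (isOpen_lt continuous_const Complex.continuous_im)
  have hUconv : Convex ℝ U := by
    apply Convex.inter _ (convex_ball 0 R)
    exact (convex_halfSpace_re_gt (1/2)).inter (convex_halfSpace_im_gt 0)
  have hwU : w ∈ U := by
    refine ⟨⟨h1, h2⟩, ?_⟩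
    rw [Metric.mem_ball, dist_zero_right, hR]
    linarith
  have hz0U : (2 + Complex.I) ∈ U := by
    constructor
    · constructor
      · simp only [Set.mem_setOf_eq, Complex.add_re, Complex.I_re, Complex.re_ofNat]
        norm_num
      · simp
    · rw [Metric.mem_ball, dist_zero_right]
      have hle : ‖(2 : ℂ) + Complex.I‖ ≤ ‖(2:ℂ)‖ + ‖Complex.I‖ := norm_add_le _ _
      have h2n : ‖(2:ℂ)‖ = 2 := by simp
      have hIn : ‖Complex.I‖ = 1 := by simp
      have h0 : (0:ℝ) ≤ ‖w‖ := norm_nonneg w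
      rw [hR]; rw [h2n, hIn] at hle; linarith
  have hana1 : AnalyticOnNhd ℂ etaF U := by
    apply DifferentiableOn.analyticOnNhd _ hUopen
    show DifferentiableOn ℂ (fun z => ∑' j, etaPair z j) U
    apply Complex.differentiableOn_tsum_of_summable_norm
      (u := fun j : ℕ => R * ((2*j+1 : ℝ)) ^ (-(3:ℝ)/2))
    · exact (summable_aux (by norm_num)).mul_left R
    · intro j
      have hd : Differentiable ℂ
          (fun z : ℂ => ((2*j+1 : ℕ) : ℂ) ^ (-z) - ((2*j+2 : ℕ) : ℂ) ^ (-z)) :=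
        (differentiable_neg.const_cpow (Or.inl (Nat.cast_ne_zero.2 (by omega)))).sub
          (differentiable_neg.const_cpow (Or.inl (Nat.cast_ne_zero.2 (by omega))))
      exact hd.differentiableOn
    · exact hUopen
    · intro j z hz
      have hzre : 1/2 < z.re := hz.1.1
      have hball : ‖z‖ < R := by
        have := hz.2
        rwa [Metric.mem_ball, dist_zero_right] at this
      calc ‖etaPair z j‖ ≤ ‖z‖ * ((2*j+1 : ℝ)) ^ (-z.re - 1) :=
            etaPair_norm_le (by linarith) j
        _ ≤ R * ((2*j+1 : ℝ)) ^ (-(3:ℝ)/2) := by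
            apply mul_le_mul hball.le _ (Real.rpow_nonneg (by positivity) _)
              (by rw [hR]; positivity)
            apply Real.rpow_le_rpow_of_exponent_le
            · have : (0:ℝ) ≤ 2*(j:ℝ) := by positivity
              linarith
            · linarith
  have hana2 : AnalyticOnNhd ℂ (fun z => (1 - 2 ^ ((1:ℂ)-z)) * riemannZeta z) U := by
    apply DifferentiableOn.analyticOnNhd _ hUopen
    intro z hz
    have hz1 : z ≠ 1 := by
      intro h
      rw [h] at hz
      simpa using hz.1.2
    apply DifferentiableAt.differentiableWithinAt
    apply DifferentiableAt.mul
    · apply DifferentiableAt.sub (differentiableAt_const _)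
      exact DifferentiableAt.const_cpow (by fun_prop) (Or.inl two_ne_zero)
    · exact differentiableAt_riemannZeta hz1
  have hprecon : IsPreconnected U := hUconv.isPreconnected
  have hev : etaF =ᶠ[nhds (2 + Complex.I)] (fun z => (1 - 2 ^ ((1:ℂ)-z)) * riemannZeta z) := by
    have hopen : IsOpen {z : ℂ | 1 < z.re} := isOpen_lt continuous_const Complex.continuous_re
    have hmem : (2 + Complex.I) ∈ {z : ℂ | 1 < z.re} := by
      simp only [Set.mem_setOf_eq, Complex.add_re, Complex.I_re, Complex.re_ofNat]
      norm_num
    filter_upwards [hopen.mem_nhds hmem] with z hz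
    exact etaF_eq_of_one_lt hz
  exact hana1.eqOn_of_preconnected_of_eventuallyEq hana2 hprecon hz0U hev hwU

lemma tendsto_alt_zero {w : ℂ} (h1 : 1/2 < w.re) (h2 : 0 < w.im)
    (hz : riemannZeta w = 0) :
    Tendsto (fun n : ℕ => ∑ k ∈ Finset.Icc 1 n, (-1 : ℂ)^(k-1) * (k : ℂ) ^ (-w))
      atTop (nhds 0) := by
  have h0 : 0 < w.re := by linarith
  have := tendsto_eta_partial h0
  rwa [etaF_eq_strip h1 h2, hz, mul_zero] at this

lemma neg_one_pow_sub_one (k : ℕ) (hk : 1 ≤ k) : (-1:ℂ)^(k-1) = -(-1:ℂ)^k := by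
  obtain ⟨j, rfl⟩ : ∃ j, k = j + 1 := ⟨k-1, by omega⟩
  simp [pow_succ]

lemma c_mul {w : ℂ} {q m : ℕ} (hq : Odd q) (hq1 : 1 ≤ q) (hm : 1 ≤ m) :
    (-1:ℂ)^(q*m-1) * ((q*m : ℕ):ℂ)^(-w)
      = (q:ℂ)^(-w) * ((-1:ℂ)^(m-1) * (m:ℂ)^(-w)) := by
  have hqm : 1 ≤ q*m := Nat.one_le_iff_ne_zero.2 (by positivity)
  have hsign : (-1:ℂ)^(q*m-1) = (-1:ℂ)^(m-1) := by
    rw [neg_one_pow_sub_one _ hqm, neg_one_pow_sub_one _ hm, pow_mul, hq.neg_one_pow]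
  have hcpow : ((q*m : ℕ):ℂ)^(-w) = (q:ℂ)^(-w) * (m:ℂ)^(-w) := by
    have h1 : ((q*m : ℕ) : ℂ) = (((q:ℝ)) : ℂ) * (((m:ℝ)) : ℂ) := by push_cast; ring
    rw [h1, Complex.mul_cpow_ofReal_nonneg (Nat.cast_nonneg q) (Nat.cast_nonneg m)]
    norm_num
  rw [hsign, hcpow]
  ring

lemma filter_sum_eq (g : ℕ → ℂ) {q : ℕ} (hq : 0 < q) (n : ℕ) :
    ∑ k ∈ (Finset.Icc 1 n).filter (fun k => q ∣ k), g k
      = ∑ m ∈ Finset.Icc 1 (n/q), g (q*m) := by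
  refine Finset.sum_nbij' (fun k => k / q) (fun m => q * m) ?_ ?_ ?_ ?_ ?_
  · intro k hk
    simp only [Finset.mem_filter, Finset.mem_Icc] at hk
    obtain ⟨⟨hk1, hkn⟩, hdvd⟩ := hk
    simp only [Finset.mem_Icc]
    constructor
    · have : q ≤ k := Nat.le_of_dvd (by omega) hdvd
      exact (Nat.one_le_div_iff hq).2 this
    · exact Nat.div_le_div_right hkn
  · intro m hm
    simp only [Finset.mem_Icc] at hm
    simp only [Finset.mem_filter, Finset.mem_Icc]
    refine ⟨⟨by nlinarith [hm.1], ?_⟩, Dvd.intro m rfl⟩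
    exact (Nat.le_div_iff_mul_le hq).1 hm.2 |>.trans_eq' (by ring)
  · intro k hk
    simp only [Finset.mem_filter] at hk
    exact Nat.mul_div_cancel' hk.2
  · intro m hm
    exact Nat.mul_div_cancel_left m hq
  · intro k hk
    simp only [Finset.mem_filter] at hk
    rw [Nat.mul_div_cancel' hk.2]

lemma tendsto_nat_div_atTop {q : ℕ} (hq : 0 < q) :
    Tendsto (fun n : ℕ => n / q) atTop atTop := by
  apply tendsto_atTop_atTop.2
  intro b
  exact ⟨q*b, fun n hn => (Nat.le_div_iff_mul_le hq).2 (by rw [Nat.mul_comm]; omega)⟩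

lemma c_re_im (x y : ℝ) (k : ℕ) (hk : 0 < k) :
    ((-1:ℂ)^(k-1) * (k:ℂ)^(-((x:ℂ)+(y:ℂ)*Complex.I))).re
      = (-1:ℝ)^(k-1) * (k:ℝ)^(-x) * Real.cos (y * Real.log k)
  ∧ ((-1:ℂ)^(k-1) * (k:ℂ)^(-((x:ℂ)+(y:ℂ)*Complex.I))).im
      = -((-1:ℝ)^(k-1) * (k:ℝ)^(-x) * Real.sin (y * Real.log k)) := by
  set L := Real.log k with hL
  have hk0 : (k:ℂ) ≠ 0 := Nat.cast_ne_zero.2 hk.ne'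
  have hkR : (0:ℝ) < (k:ℝ) := by exact_mod_cast hk
  have hlog : Complex.log (k:ℂ) = (L:ℂ) := by
    rw [show ((k:ℕ):ℂ) = (((k:ℝ)):ℂ) by push_cast; ring, ← Complex.ofReal_log hkR.le]
  have hcpow : (k:ℂ)^(-((x:ℂ)+(y:ℂ)*Complex.I))
      = Complex.exp ((L:ℂ) * (-((x:ℂ)+(y:ℂ)*Complex.I))) := by
    rw [Complex.cpow_def_of_ne_zero hk0, hlog]
  set z := (L:ℂ) * (-((x:ℂ)+(y:ℂ)*Complex.I)) with hzdef
  have hzre : z.re = -(L*x) := by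
    simp [hzdef]
  have hzim : z.im = -(L*y) := by
    simp [hzdef]
  have hrpow : Real.exp (-(L*x)) = (k:ℝ)^(-x) := by
    rw [Real.rpow_def_of_pos hkR, ← hL]
    ring_nf
  have hexp_re : (Complex.exp z).re = (k:ℝ)^(-x) * Real.cos (y*L) := by
    rw [Complex.exp_re, hzre, hzim, Real.cos_neg, hrpow]
    ring_nf
  have hexp_im : (Complex.exp z).im = -((k:ℝ)^(-x) * Real.sin (y*L)) := by
    rw [Complex.exp_im, hzre, hzim, Real.sin_neg, hrpow]
    ring_nf
  have hsgn : ((-1:ℂ))^(k-1) = ((((-1:ℝ))^(k-1) : ℝ):ℂ) := by push_cast; ring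
  rw [hcpow, hsgn, Complex.re_ofReal_mul, Complex.im_ofReal_mul,
    hexp_re, hexp_im]
  constructor <;> ring

theorem stmt_7
    (e : ℕ → ℕ)
    (he_inj : Function.Injective e)
    (he_range : Set.range e = {q : ℕ | Squarefree q ∧ Odd q ∧ 1 < q})
    (sgn : ℕ → ℝ) (hsgn : ∀ q : ℕ, sgn q = (-1 : ℝ) ^ q.primeFactors.card)
    (δ : ℕ → ℕ → ℝ) (hδ : ∀ k i : ℕ, δ k i = if e i ∣ k then 1 else 0)
    (f : ℕ → ℕ → ℝ) (hf : ∀ k h : ℕ, f k h = ∑ i ∈ Finset.range h, sgn (e i) * δ k i)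
    (x y : ℝ) (hx : 1 / 2 < x) (hx1 : x < 1) (hy : 0 < y)
    (hz : riemannZeta ((x : ℂ) + (y : ℂ) * Complex.I) = 0)
    (a b : ℕ → ℝ)
    (ha : ∀ k : ℕ, 0 < k → a k = (-1 : ℝ) ^ (k - 1) * (k : ℝ) ^ (-x) * Real.cos (y * Real.log k))
    (hb : ∀ k : ℕ, 0 < k → b k = (-1 : ℝ) ^ (k - 1) * (k : ℝ) ^ (-x) * Real.sin (y * Real.log k))
    (h : ℕ) (hh : 0 < h) :
    Tendsto (fun n : ℕ => ∑ k ∈ Finset.Icc 1 n, f k h * a k) atTop (nhds 0) ∧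
    Tendsto (fun n : ℕ => ∑ k ∈ Finset.Icc 1 n, f k h * b k) atTop (nhds 0) := by
  classical
  set c : ℕ → ℂ := fun k => (-1:ℂ)^(k-1) * (k:ℂ)^(-((x:ℂ) + (y:ℂ) * Complex.I)) with hc
  have halt : Tendsto (fun n : ℕ => ∑ k ∈ Finset.Icc 1 n, c k) atTop (nhds 0) := by
    apply tendsto_alt_zero _ _ hz
    · simp
      linarith
    · simp
      exact hy
  have hei : ∀ i : ℕ, Odd (e i) ∧ 1 < e i := by
    intro i
    have hmem : e i ∈ Set.range e := Set.mem_range_self i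
    rw [he_range] at hmem
    exact ⟨hmem.2.1, hmem.2.2⟩
  have key : ∀ i : ℕ, Tendsto
      (fun n : ℕ => ∑ k ∈ (Finset.Icc 1 n).filter (fun k => e i ∣ k), c k)
      atTop (nhds 0) := by
    intro i
    obtain ⟨hodd, h1⟩ := hei i
    have hq : 0 < e i := by omega
    have heq : ∀ n, ∑ k ∈ (Finset.Icc 1 n).filter (fun k => e i ∣ k), c k
        = (e i : ℂ)^(-((x:ℂ) + (y:ℂ) * Complex.I))
            * ∑ m ∈ Finset.Icc 1 (n / e i), c m := by
      intro n
      rw [filter_sum_eq c hq n, Finset.mul_sum]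
      apply Finset.sum_congr rfl
      intro m hm
      simp only [Finset.mem_Icc] at hm
      exact c_mul hodd (by omega) hm.1
    simp only [heq]
    have := (halt.comp (tendsto_nat_div_atTop hq)).const_mul
      ((e i : ℂ)^(-((x:ℂ) + (y:ℂ) * Complex.I)))
    simpa [Function.comp] using this
  have hswap : ∀ n : ℕ, ∑ k ∈ Finset.Icc 1 n, ((f k h : ℝ) : ℂ) * c k
      = ∑ i ∈ Finset.range h, ((sgn (e i) : ℝ) : ℂ)
          * ∑ k ∈ (Finset.Icc 1 n).filter (fun k => e i ∣ k), c k := by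
    intro n
    have step1 : ∀ k, ((f k h : ℝ) : ℂ) * c k
        = ∑ i ∈ Finset.range h, ((sgn (e i) : ℝ) : ℂ) * (if e i ∣ k then c k else 0) := by
      intro k
      rw [hf k h]
      push_cast
      rw [Finset.sum_mul]
      apply Finset.sum_congr rfl
      intro i _
      rw [hδ k i]
      by_cases hd : e i ∣ k
      · simp [hd]
      · simp [hd]
    simp only [step1]
    rw [Finset.sum_comm]
    apply Finset.sum_congr rfl
    intro i _
    rw [← Finset.mul_sum, Finset.sum_filter]
  have hcomplex : Tendsto (fun n : ℕ => ∑ k ∈ Finset.Icc 1 n, ((f k h : ℝ) : ℂ) * c k)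
      atTop (nhds 0) := by
    simp only [hswap]
    have := tendsto_finset_sum (Finset.range h)
      (fun i _ => (key i).const_mul (((sgn (e i) : ℝ) : ℂ)))
    simpa using this
  have hre : ∀ n, ∑ k ∈ Finset.Icc 1 n, f k h * a k
      = (∑ k ∈ Finset.Icc 1 n, ((f k h : ℝ) : ℂ) * c k).re := by
    intro n
    rw [Complex.re_sum]
    apply Finset.sum_congr rfl
    intro k hk
    simp only [Finset.mem_Icc] at hk
    have hk1 : 0 < k := hk.1
    rw [Complex.re_ofReal_mul, ha k hk1, hc]
    rw [(c_re_im x y k hk1).1]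
  have him : ∀ n, ∑ k ∈ Finset.Icc 1 n, f k h * b k
      = -(∑ k ∈ Finset.Icc 1 n, ((f k h : ℝ) : ℂ) * c k).im := by
    intro n
    rw [Complex.im_sum, ← Finset.sum_neg_distrib]
    apply Finset.sum_congr rfl
    intro k hk
    simp only [Finset.mem_Icc] at hk
    have hk1 : 0 < k := hk.1
    rw [Complex.im_ofReal_mul, hb k hk1, hc]
    rw [(c_re_im x y k hk1).2]
    ring
  constructor
  · simp only [hre]
    have := (Complex.continuous_re.tendsto 0).comp hcomplex
    simpa [Function.comp_def] using this
  · simp only [him]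
    have := ((Complex.continuous_im.tendsto 0).comp hcomplex).neg
    simpa [Function.comp_def] using this
end
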